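/- Let k be a field of characteristic zero and n ≥ 3. Let g be the n-dimensional Lie algebra over k with basis f₁,…,f_n and brackets [f_i,f_j] = 6(j−i)·f_{i+j} whenever 1 ≤ i ≤ j and i+j ≤ n, and [f_i,f_j] = 0 whenever i+j > n. Then the bilinear product defined on the basis by f_i·f_j = 6(j−1)·f_{i+j} if i+j ≤ n and f_i·f_j = 0 if i+j > n is a Novikov structure on g: it satisfies left-symmetry x·(y·z) − (x·y)·z = y·(x·z) − (y·x)·z, the Novikov identity (x·y)·z = (x·z)·y, and x·y − y·x = [x,y] for all x, y, z ∈ g. -/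

import Mathlib

/-- The bilinear product on the filiform Lie algebra `f_{9/10,n}` (in the basis
`f₁, …, f_n`) defined on basis vectors by `f_i · f_j = 6(j−1)·f_{i+j}` if `i+j ≤ n`
and `f_i · f_j = 0` if `i+j > n`.  Here `f` is indexed by `Fin n`, so `f ⟨a, _⟩`
is the basis vector `f_{a+1}`. -/
noncomputable def novProd {k g : Type*} [Field k] [LieRing g] [LieAlgebra k g]
    (n : ℕ) (f : Module.Basis (Fin n) k g) : g →ₗ[k] g →ₗ[k] g :=
  f.constr k fun i => f.constr k fun j =>
    if h : (i : ℕ) + (j : ℕ) + 2 ≤ n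
    then (6 * ((j : ℕ) : k)) • f ⟨(i : ℕ) + (j : ℕ) + 1, by omega⟩
    else 0

section aux
variable {k g : Type*} [Field k] [LieRing g] [LieAlgebra k g]
  (n : ℕ) (f : Module.Basis (Fin n) k g)

lemma novProd_basis (i j : Fin n) :
    novProd n f (f i) (f j) =
      if h : (i : ℕ) + (j : ℕ) + 2 ≤ n
      then (6 * ((j : ℕ) : k)) • f ⟨(i : ℕ) + (j : ℕ) + 1, by omega⟩
      else 0 := by
  unfold novProd
  rw [Module.Basis.constr_basis, Module.Basis.constr_basis]

lemma tri1 (i j l : Fin n) :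
    novProd n f (f i) (novProd n f (f j) (f l)) =
      if h : (i : ℕ) + (j : ℕ) + (l : ℕ) + 3 ≤ n
      then ((6 * ((l : ℕ) : k)) * (6 * (((j : ℕ) : k) + ((l : ℕ) : k) + 1))) •
        f ⟨(i : ℕ) + (j : ℕ) + (l : ℕ) + 2, by omega⟩
      else 0 := by
  rw [novProd_basis n f j l]
  by_cases hjl : (j : ℕ) + (l : ℕ) + 2 ≤ n
  · rw [dif_pos hjl, map_smul, novProd_basis]
    simp only [Fin.val_mk]
    by_cases h : (i : ℕ) + (j : ℕ) + (l : ℕ) + 3 ≤ n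
    · rw [dif_pos (by omega : (i : ℕ) + ((j : ℕ) + (l : ℕ) + 1) + 2 ≤ n), dif_pos h,
        smul_smul]
      have he : (⟨(i : ℕ) + ((j : ℕ) + (l : ℕ) + 1) + 1, by omega⟩ : Fin n)
          = ⟨(i : ℕ) + (j : ℕ) + (l : ℕ) + 2, by omega⟩ := by
        simp [Fin.ext_iff]; omega
      rw [he]
      congr 1
      push_cast
      ring
    · rw [dif_neg (show ¬((i : ℕ) + ((j : ℕ) + (l : ℕ) + 1) + 2 ≤ n) by omega),
        dif_neg h, smul_zero]
  · rw [dif_neg hjl, map_zero, dif_neg (show ¬((i:ℕ)+(j:ℕ)+(l:ℕ)+3 ≤ n) by omega)]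

lemma tri2 (i j l : Fin n) :
    novProd n f (novProd n f (f i) (f j)) (f l) =
      if h : (i : ℕ) + (j : ℕ) + (l : ℕ) + 3 ≤ n
      then ((6 * ((j : ℕ) : k)) * (6 * ((l : ℕ) : k))) •
        f ⟨(i : ℕ) + (j : ℕ) + (l : ℕ) + 2, by omega⟩
      else 0 := by
  rw [novProd_basis n f i j]
  by_cases hij : (i : ℕ) + (j : ℕ) + 2 ≤ n
  · rw [dif_pos hij, map_smul, LinearMap.smul_apply, novProd_basis]
    simp only [Fin.val_mk]
    by_cases h : (i : ℕ) + (j : ℕ) + (l : ℕ) + 3 ≤ n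
    · rw [dif_pos (by omega : (i : ℕ) + (j : ℕ) + 1 + (l : ℕ) + 2 ≤ n), dif_pos h,
        smul_smul]
      have he : (⟨(i : ℕ) + (j : ℕ) + 1 + (l : ℕ) + 1, by omega⟩ : Fin n)
          = ⟨(i : ℕ) + (j : ℕ) + (l : ℕ) + 2, by omega⟩ := by
        simp [Fin.ext_iff]; omega
      rw [he]
    · rw [dif_neg (show ¬((i : ℕ) + (j : ℕ) + 1 + (l : ℕ) + 2 ≤ n) by omega),
        dif_neg h, smul_zero]
  · rw [dif_neg hij, map_zero, LinearMap.zero_apply,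
      dif_neg (show ¬((i:ℕ)+(j:ℕ)+(l:ℕ)+3 ≤ n) by omega)]

end aux

attribute [local instance] LieRing.ofAssociativeRing LieAlgebra.ofAssociativeAlgebra

/-- Let `k` be a field of characteristic zero, `n ≥ 3`, and let `g`
be the `n`-dimensional Lie algebra with basis `f₁, …, f_n` and brackets
`[f_i, f_j] = 6(j−i)·f_{i+j}` for `i+j ≤ n` and `[f_i, f_j] = 0` for `i+j > n`.
Then the bilinear product determined by `f_i · f_j = 6(j−1)·f_{i+j}` (zero if
`i+j > n`) is a Novikov structure on `g`: it is left-symmetric, satisfies the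
Novikov identity, and its commutator is the Lie bracket. -/
theorem filiform_novikov_structure
    {k g : Type*} [Field k] [CharZero k] [LieRing g] [LieAlgebra k g]
    (n : ℕ) (hn : 3 ≤ n) (f : Module.Basis (Fin n) k g)
    (hbr : ∀ i j : Fin n, ⁅f i, f j⁆ =
      if h : (i : ℕ) + (j : ℕ) + 2 ≤ n
      then (6 * ((j : ℕ) : k) - 6 * ((i : ℕ) : k)) • f ⟨(i : ℕ) + (j : ℕ) + 1, by omega⟩
      else 0) :
    (∀ x y z : g, novProd n f x (novProd n f y z) - novProd n f (novProd n f x y) z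
        = novProd n f y (novProd n f x z) - novProd n f (novProd n f y x) z) ∧
    (∀ x y z : g, novProd n f (novProd n f x y) z = novProd n f (novProd n f x z) y) ∧
    (∀ x y : g, novProd n f x y - novProd n f y x = ⁅x, y⁆) := by
  set P : g →ₗ[k] g →ₗ[k] g := novProd n f with hP
  refine ⟨?_, ?_, ?_⟩
  · -- left-symmetry
    set A : g →ₗ[k] g →ₗ[k] g →ₗ[k] g :=
      ((LinearMap.llcomp k g g g).comp P).compl₂ P
        - ((LinearMap.llcomp k g g (g →ₗ[k] g)) P).comp P with hA
    have key : A = A.flip := by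
      refine f.ext fun i => f.ext fun j => f.ext fun l => ?_
      have hAapp : ∀ x y z : g, A x y z = P x (P y z) - P (P x y) z := fun _ _ _ => rfl
      have hAflip : ∀ x y z : g, A.flip x y z = P y (P x z) - P (P y x) z :=
        fun _ _ _ => rfl
      rw [hAapp, hAflip, hP, tri1, tri2, tri1, tri2]
      by_cases h : (i : ℕ) + (j : ℕ) + (l : ℕ) + 3 ≤ n
      · rw [dif_pos h, dif_pos h,
          dif_pos (show (j : ℕ) + (i : ℕ) + (l : ℕ) + 3 ≤ n by omega),
          dif_pos (show (j : ℕ) + (i : ℕ) + (l : ℕ) + 3 ≤ n by omega)]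
        have he : (⟨(j : ℕ) + (i : ℕ) + (l : ℕ) + 2, by omega⟩ : Fin n)
            = ⟨(i : ℕ) + (j : ℕ) + (l : ℕ) + 2, by omega⟩ := by
          simp [Fin.ext_iff]; omega
        rw [he, ← sub_smul, ← sub_smul]
        congr 1
        ring
      · rw [dif_neg h, dif_neg h,
          dif_neg (show ¬((j : ℕ) + (i : ℕ) + (l : ℕ) + 3 ≤ n) by omega),
          dif_neg (show ¬((j : ℕ) + (i : ℕ) + (l : ℕ) + 3 ≤ n) by omega)]
    intro x y z
    have := LinearMap.congr_fun (LinearMap.congr_fun (LinearMap.congr_fun key x) y) z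
    have h1 : A x y z = P x (P y z) - P (P x y) z := rfl
    have h2 : A.flip x y z = P y (P x z) - P (P y x) z := rfl
    rw [h1, h2] at this
    exact this
  · -- Novikov identity
    set B : g →ₗ[k] g →ₗ[k] g →ₗ[k] g :=
      ((LinearMap.llcomp k g g (g →ₗ[k] g)) P).comp P with hB
    have key : B = LinearMap.lflip.comp B := by
      refine f.ext fun i => f.ext fun j => f.ext fun l => ?_
      have h1 : ∀ x y z : g, B x y z = P (P x y) z := fun _ _ _ => rfl
      have h2 : ∀ x y z : g, (LinearMap.lflip.comp B) x y z = P (P x z) y :=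
        fun _ _ _ => rfl
      rw [h1, h2, hP, tri2, tri2]
      by_cases h : (i : ℕ) + (j : ℕ) + (l : ℕ) + 3 ≤ n
      · rw [dif_pos h, dif_pos (show (i : ℕ) + (l : ℕ) + (j : ℕ) + 3 ≤ n by omega)]
        have he : (⟨(i : ℕ) + (l : ℕ) + (j : ℕ) + 2, by omega⟩ : Fin n)
            = ⟨(i : ℕ) + (j : ℕ) + (l : ℕ) + 2, by omega⟩ := by
          simp [Fin.ext_iff]; omega
        rw [he]
        congr 1
        ring
      · rw [dif_neg h, dif_neg (show ¬((i : ℕ) + (l : ℕ) + (j : ℕ) + 3 ≤ n) by omega)]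
    intro x y z
    have := LinearMap.congr_fun (LinearMap.congr_fun (LinearMap.congr_fun key x) y) z
    exact this
  · -- commutator
    have key : P - P.flip = (LieAlgebra.ad k g).toLinearMap := by
      refine f.ext fun i => f.ext fun j => ?_
      have h1 : (P - P.flip) (f i) (f j) = P (f i) (f j) - P (f j) (f i) := rfl
      have h2 : (LieAlgebra.ad k g).toLinearMap (f i) (f j) = ⁅f i, f j⁆ := rfl
      rw [h1, h2, hP, novProd_basis, novProd_basis, hbr i j]
      by_cases h : (i : ℕ) + (j : ℕ) + 2 ≤ n
      · rw [dif_pos h, dif_pos h, dif_pos (show (j : ℕ) + (i : ℕ) + 2 ≤ n by omega)]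
        have he : (⟨(j : ℕ) + (i : ℕ) + 1, by omega⟩ : Fin n)
            = ⟨(i : ℕ) + (j : ℕ) + 1, by omega⟩ := by
          simp [Fin.ext_iff]; omega
        rw [he, ← sub_smul]
      · rw [dif_neg h, dif_neg h,
          dif_neg (show ¬((j : ℕ) + (i : ℕ) + 2 ≤ n) by omega), sub_zero]
    intro x y
    have := LinearMap.congr_fun (LinearMap.congr_fun key x) y
    have h1 : (P - P.flip) x y = P x y - P y x := rfl
    have h2 : (LieAlgebra.ad k g).toLinearMap x y = ⁅x, y⁆ := rfl
    rw [h1, h2] at this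
    exact this
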